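/- Suppose H is (n−Δ−1)-regular and let G be a d-regular simple graph on V with exactly i red edges, where dn ≥ 2i + 12. Let (v_0,…,v_7) be a Type IIb+ octagon in G. Then the number b̂(G,v) of 8-tuples (y_1,…,y_8) of additional vertices on which an inverse Type IIb+ switching can be performed with this octagon satisfies (dn−2i−12)⁴ − 6(dn)³d² − 6(dn)³Δd ≤ b̂(G,v) ≤ (dn)⁴. -/

import Mathlib

open SimpleGraph
open scoped Classical

/-- Distinctness of an 8-tuple, except that `v2 = v7` is allowed. -/
def Distinct8 {n : ℕ} (v0 v1 v2 v3 v4 v5 v6 v7 : Fin n) : Prop :=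
  List.Pairwise (· ≠ ·) [v0, v1, v3, v4, v5, v6] ∧
  (∀ x ∈ [v0, v1, v3, v4, v5, v6], v2 ≠ x ∧ v7 ≠ x)

/-- A Type IIb+ octagon in `G` (host graph `H`): `v0v1` and `v1v2` are red edges of `G`;
`v0v7`, `v3v4`, `v5v6` are black edges of `G`; `v2v3`, `v4v5`, `v6v7` are black
non-edges of `G`; vertices distinct except `v2 = v7` allowed. -/
def OctIIbPlus {n : ℕ} (H G : SimpleGraph (Fin n))
    (v0 v1 v2 v3 v4 v5 v6 v7 : Fin n) : Prop :=
  (G.Adj v0 v1 ∧ Hᶜ.Adj v0 v1) ∧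
  (G.Adj v1 v2 ∧ Hᶜ.Adj v1 v2) ∧
  (G.Adj v0 v7 ∧ H.Adj v0 v7) ∧
  (G.Adj v3 v4 ∧ H.Adj v3 v4) ∧
  (G.Adj v5 v6 ∧ H.Adj v5 v6) ∧
  (¬ G.Adj v2 v3 ∧ H.Adj v2 v3) ∧
  (¬ G.Adj v4 v5 ∧ H.Adj v4 v5) ∧
  (¬ G.Adj v6 v7 ∧ H.Adj v6 v7) ∧
  Distinct8 v0 v1 v2 v3 v4 v5 v6 v7

/-- `b̂(G,v)`: given a Type IIb+ octagon `(v0,…,v7)` in `G`, the number of 8-tuples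
`(y1,…,y8)` of vertices such that `y1y2`, `y3y4`, `y5y6`, `y7y8` are black edges of `G`
which are pairwise distinct and distinct from the edges `v0v7`, `v3v4`, `v5v6`, and
`v0y1`, `v1y3`, `v1y5`, `v2y7`, `y2y4`, `y6y8` are black non-edges of `G`.
(Here `y i` is `y_{i+1}` in 1-indexed notation.) -/
noncomputable def bhatIIb {n : ℕ} (H G : SimpleGraph (Fin n))
    (v0 v1 v2 v3 v4 v5 v6 v7 : Fin n) : ℕ :=
  Nat.card {y : Fin 8 → Fin n //
    (G.Adj (y 0) (y 1) ∧ H.Adj (y 0) (y 1)) ∧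
    (G.Adj (y 2) (y 3) ∧ H.Adj (y 2) (y 3)) ∧
    (G.Adj (y 4) (y 5) ∧ H.Adj (y 4) (y 5)) ∧
    (G.Adj (y 6) (y 7) ∧ H.Adj (y 6) (y 7)) ∧
    List.Pairwise (· ≠ ·)
      [s(y 0, y 1), s(y 2, y 3), s(y 4, y 5), s(y 6, y 7)] ∧
    (∀ e ∈ [s(y 0, y 1), s(y 2, y 3), s(y 4, y 5), s(y 6, y 7)],
      e ≠ s(v0, v7) ∧ e ≠ s(v3, v4) ∧ e ≠ s(v5, v6)) ∧
    (¬ G.Adj v0 (y 0) ∧ H.Adj v0 (y 0)) ∧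
    (¬ G.Adj v1 (y 2) ∧ H.Adj v1 (y 2)) ∧
    (¬ G.Adj v1 (y 4) ∧ H.Adj v1 (y 4)) ∧
    (¬ G.Adj v2 (y 6) ∧ H.Adj v2 (y 6)) ∧
    (¬ G.Adj (y 1) (y 3) ∧ H.Adj (y 1) (y 3)) ∧
    (¬ G.Adj (y 5) (y 7) ∧ H.Adj (y 5) (y 7))}

open Finset

section Helpers

private lemma card_adjPairs {n : ℕ} (K : SimpleGraph (Fin n))
    [inst : DecidablePred fun p : Fin n × Fin n => K.Adj p.1 p.2] :
    (univ.filter fun p : Fin n × Fin n => K.Adj p.1 p.2).card = ∑ v, K.degree v := by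
  classical
  rw [card_eq_sum_card_fiberwise (f := Prod.fst) (t := univ) (fun x _ => mem_univ _)]
  refine sum_congr rfl fun v _ => ?_
  rw [← card_neighborFinset_eq_degree]
  refine card_nbij' (fun p => p.2) (fun w => (v, w)) ?_ ?_ ?_ ?_
  · rintro ⟨a, b⟩ hp
    simp only [mem_coe, mem_filter, mem_univ, true_and] at hp
    obtain ⟨h1, h2⟩ := hp
    subst h2
    simpa [mem_neighborFinset] using h1
  · intro w hw
    simp only [mem_coe, mem_neighborFinset] at hw
    simp [hw]
  · rintro ⟨a, b⟩ hp
    simp only [mem_coe, mem_filter, mem_univ, true_and] at hp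
    simp [hp.2]
  · intro w hw; rfl

private lemma cardOE {n d : ℕ} (G : SimpleGraph (Fin n)) (hreg : G.IsRegularOfDegree d)
    [inst : DecidablePred fun p : Fin n × Fin n => G.Adj p.1 p.2] :
    (univ.filter fun p : Fin n × Fin n => G.Adj p.1 p.2).card = d * n := by
  rw [card_adjPairs]
  simp [show ∀ v, G.degree v = d from hreg, mul_comm]

private lemma cardOR {n : ℕ} (G H : SimpleGraph (Fin n)) (i : ℕ)
    (hred : (G ⊓ Hᶜ).edgeSet.ncard = i)
    [inst : DecidablePred fun p : Fin n × Fin n => G.Adj p.1 p.2 ∧ Hᶜ.Adj p.1 p.2] :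
    (univ.filter fun p : Fin n × Fin n => G.Adj p.1 p.2 ∧ Hᶜ.Adj p.1 p.2).card = 2 * i := by
  classical
  have h1 : (univ.filter fun p : Fin n × Fin n => G.Adj p.1 p.2 ∧ Hᶜ.Adj p.1 p.2)
      = (univ.filter fun p : Fin n × Fin n => (G ⊓ Hᶜ).Adj p.1 p.2) := by
    apply filter_congr; intro p _; simp [inf_adj]
  rw [h1, card_adjPairs, sum_degrees_eq_twice_card_edges]
  congr 1
  rw [← hred]
  rw [Set.ncard_eq_toFinset_card']
  apply Finset.card_bij (fun x _ => x) <;> intros <;>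
    simp_all [Set.mem_toFinset, SimpleGraph.mem_edgeFinset]

private lemma fst_in_le {n d : ℕ} (G : SimpleGraph (Fin n)) (hreg : G.IsRegularOfDegree d)
    (B0 : Finset (Fin n)) {s : Finset (Fin n × Fin n)}
    (hs : ∀ p ∈ s, G.Adj p.1 p.2 ∧ p.1 ∈ B0) : s.card ≤ B0.card * d := by
  rw [mul_comm]
  refine card_le_mul_card_image_of_maps_to (f := Prod.fst) (fun p hp => (hs p hp).2) d
    (fun b _ => ?_)
  calc (s.filter fun p => p.1 = b).card
      ≤ (G.neighborFinset b).card := by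
        refine card_le_card_of_injOn Prod.snd (fun p hp => ?_) ?_
        · simp only [mem_coe, mem_filter] at hp
          rw [mem_coe, mem_neighborFinset, ← hp.2]
          exact (hs p hp.1).1
        · rintro ⟨a1, b1⟩ h1 ⟨a2, b2⟩ h2 h
          simp only [coe_filter, Set.mem_setOf_eq] at h1 h2
          simp_all
    _ = d := by rw [card_neighborFinset_eq_degree, hreg]

private lemma snd_in_le {n d : ℕ} (G : SimpleGraph (Fin n)) (hreg : G.IsRegularOfDegree d)
    (B0 : Finset (Fin n)) {s : Finset (Fin n × Fin n)}
    (hs : ∀ p ∈ s, G.Adj p.1 p.2 ∧ p.2 ∈ B0) : s.card ≤ B0.card * d := by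
  rw [mul_comm]
  refine card_le_mul_card_image_of_maps_to (f := Prod.snd) (fun p hp => (hs p hp).2) d
    (fun b _ => ?_)
  calc (s.filter fun p => p.2 = b).card
      ≤ (G.neighborFinset b).card := by
        refine card_le_card_of_injOn Prod.fst (fun p hp => ?_) ?_
        · simp only [mem_coe, mem_filter] at hp
          rw [mem_coe, mem_neighborFinset, ← hp.2]
          exact ((hs p hp.1).1).symm
        · rintro ⟨a1, b1⟩ h1 ⟨a2, b2⟩ h2 h
          simp only [coe_filter, Set.mem_setOf_eq] at h1 h2
          simp_all
    _ = d := by rw [card_neighborFinset_eq_degree, hreg]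

private lemma two_fiber_le {n : ℕ} {β : Type} [DecidableEq β]
    (s : Finset (Fin 8 → Fin n)) (A3 : Finset β)
    (f : (Fin 8 → Fin n) → β) (g : (Fin 8 → Fin n) → Fin n × Fin n)
    (c : β → Fin n × Fin n)
    (hmaps : ∀ y ∈ s, f y ∈ A3)
    (hinj : ∀ y ∈ s, ∀ z ∈ s, f y = f z → g y = g z → y = z)
    (heq : ∀ y ∈ s, s((g y).1, (g y).2) = s((c (f y)).1, (c (f y)).2)) :
    s.card ≤ 2 * A3.card := by
  refine card_le_mul_card_image_of_maps_to hmaps 2 (fun b _ => ?_)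
  have h2 : (s.filter fun y => f y = b).card
      ≤ ({(c b), ((c b).2, (c b).1)} : Finset (Fin n × Fin n)).card := by
    refine card_le_card_of_injOn g (fun y hy => ?_) ?_
    · simp only [mem_coe, mem_filter] at hy
      obtain ⟨hys, hfb⟩ := hy
      have := heq y hys
      rw [hfb] at this
      rcases Sym2.eq_iff.1 this with ⟨e1, e2⟩ | ⟨e1, e2⟩ <;>
        simp [Finset.mem_insert, Prod.ext_iff, e1, e2]
    · intro y hy z hz hg
      simp only [coe_filter, Set.mem_setOf_eq] at hy hz
      exact hinj y hy.1 z hz.1 (hy.2.trans hz.2.symm) hg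
  refine h2.trans (le_trans (card_insert_le _ _) ?_)
  simp

private lemma badset_card_le {n d Δ : ℕ} (G H : SimpleGraph (Fin n))
    (hreg : G.IsRegularOfDegree d) (hH : H.IsRegularOfDegree (n - Δ - 1))
    (hn : Δ + 1 ≤ n) (x : Fin n) (R : Finset (Fin n))
    (hR : R ⊆ G.neighborFinset x ∩ (univ \ H.neighborFinset x)) :
    (G.neighborFinset x ∪ (univ \ H.neighborFinset x)).card + R.card ≤ d + Δ + 1 := by
  have h1 : (G.neighborFinset x).card = d := by rw [card_neighborFinset_eq_degree, hreg]
  have h2 : (univ \ H.neighborFinset x).card = Δ + 1 := by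
    rw [card_sdiff_of_subset (subset_univ _), card_univ, Fintype.card_fin,
      card_neighborFinset_eq_degree, hH]
    omega
  have h3 := card_union_add_card_inter (G.neighborFinset x) (univ \ H.neighborFinset x)
  have h4 : R.card ≤ (G.neighborFinset x ∩ (univ \ H.neighborFinset x)).card :=
    card_le_card hR
  omega

private lemma bad2_card_le {n d Δ : ℕ} (G H : SimpleGraph (Fin n))
    (hreg : G.IsRegularOfDegree d) (hH : H.IsRegularOfDegree (n - Δ - 1))
    (hn : Δ + 1 ≤ n) (e1 : Fin n × Fin n) (he1 : G.Adj e1.1 e1.2)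
    {s : Finset (Fin n × Fin n)}
    (hs : ∀ p ∈ s, G.Adj p.1 p.2 ∧ (G.Adj e1.2 p.2 ∨ ¬ H.Adj e1.2 p.2) ∧
      s(p.1, p.2) ≠ s(e1.1, e1.2)) :
    s.card ≤ d * d + Δ * d + (d - 1) := by
  classical
  set s1 := s.filter (fun p => p.2 ∈ G.neighborFinset e1.2) with hs1
  set s2 := s.filter (fun p => p.2 ∈ ((univ \ H.neighborFinset e1.2).erase e1.2)) with hs2
  set s3 := s.filter (fun p => p.2 = e1.2) with hs3
  have hsub : s ⊆ s1 ∪ s2 ∪ s3 := by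
    intro p hp
    obtain ⟨hpG, hdisj, hne⟩ := hs p hp
    simp only [mem_union, hs1, hs2, hs3, mem_filter, mem_erase, mem_sdiff, mem_univ,
      true_and, mem_neighborFinset]
    rcases hdisj with h | h
    · exact Or.inl (Or.inl ⟨hp, h⟩)
    · by_cases hpe : p.2 = e1.2
      · exact Or.inr ⟨hp, hpe⟩
      · exact Or.inl (Or.inr ⟨hp, hpe, h⟩)
  have hc1 : s1.card ≤ d * d := by
    have := snd_in_le G hreg (G.neighborFinset e1.2)
      (s := s1) (fun p hp => by
        simp only [hs1, mem_filter] at hp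
        exact ⟨(hs p hp.1).1, hp.2⟩)
    rwa [card_neighborFinset_eq_degree, hreg] at this
  have hc2 : s2.card ≤ Δ * d := by
    have hcard : ((univ \ H.neighborFinset e1.2).erase e1.2).card = Δ := by
      rw [card_erase_of_mem (by simp [mem_neighborFinset])]
      rw [card_sdiff_of_subset (subset_univ _), card_univ, Fintype.card_fin,
        card_neighborFinset_eq_degree, hH]
      omega
    have := snd_in_le G hreg ((univ \ H.neighborFinset e1.2).erase e1.2)
      (s := s2) (fun p hp => by
        simp only [hs2, mem_filter] at hp
        exact ⟨(hs p hp.1).1, hp.2⟩)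
    rwa [hcard] at this
  have hc3 : s3.card ≤ d - 1 := by
    have hmem : e1.1 ∈ G.neighborFinset e1.2 := by
      rw [mem_neighborFinset]; exact he1.symm
    have hcard : ((G.neighborFinset e1.2).erase e1.1).card = d - 1 := by
      rw [card_erase_of_mem hmem, card_neighborFinset_eq_degree, hreg]
    rw [← hcard]
    refine card_le_card_of_injOn Prod.fst (fun p hp => ?_) ?_
    · simp only [mem_coe, hs3, mem_filter] at hp
      obtain ⟨hps, hpe⟩ := hp
      obtain ⟨hpG, _, hne⟩ := hs p hps
      rw [mem_coe, mem_erase, mem_neighborFinset]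
      constructor
      · intro hcon
        apply hne
        rw [hcon, hpe]
      · rw [← hpe]; exact hpG.symm
    · rintro ⟨a1, b1⟩ h1 ⟨a2, b2⟩ h2 h
      simp only [coe_filter, Set.mem_setOf_eq, hs3] at h1 h2
      simp_all
  calc s.card ≤ (s1 ∪ s2 ∪ s3).card := card_le_card hsub
    _ ≤ (s1 ∪ s2).card + s3.card := card_union_le _ _
    _ ≤ s1.card + s2.card + s3.card := by
        have := card_union_le s1 s2; omega
    _ ≤ d * d + Δ * d + (d - 1) := by omega

end Helpers

set_option maxHeartbeats 3000000 in
private lemma final_combined (d n Δ i : ℕ)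
    (SFc T'c APYc F1c F2c F3c F4c F5c F6c Ac OBc : ℕ)
    (hd : 1 ≤ d) (hΔ1 : 1 ≤ Δ) (hdn : 2 * i + 12 ≤ d * n)
    (hOBsum : OBc + 2 * i = d * n)
    (hOBA : OBc ≤ Ac + 6)
    (hAPY : APYc = Ac * (Ac * (Ac * Ac)))
    (hT'low : APYc ≤ T'c + 12 * (Ac * (Ac * Ac)))
    (hTcard : T'c ≤ SFc + (F1c + (F2c + (F3c + (F4c + (F5c + F6c))))))
    (hF1b : F1c ≤ ((d + Δ) * d) * ((d * n) * ((d * n) * (d * n))))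
    (hF2b : F2c ≤ (d * n) * (((d + Δ - 1) * d) * ((d * n) * (d * n))))
    (hF3b : F3c ≤ (d * n) * ((d * n) * (((d + Δ - 1) * d) * (d * n))))
    (hF4b : F4c ≤ (d * n) * ((d * n) * ((d * n) * ((d + Δ) * d))))
    (hF5b : F5c ≤ ((d * d + Δ * d + (d - 1)) * ((d * n) * (d * n))) * (d * n))
    (hF6b : F6c ≤ ((d * d + Δ * d + (d - 1)) * ((d * n) * (d * n))) * (d * n))
    (hSFUB : SFc ≤ (d * n) * ((d * n) * ((d * n) * (d * n)))) :
    ((d * n - 2 * i - 12 : ℤ) ^ 4 - 6 * (d * n) ^ 3 * d ^ 2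
        - 6 * (d * n) ^ 3 * Δ * d) ≤ (SFc : ℤ) ∧
      (SFc : ℤ) ≤ (d * n : ℤ) ^ 4 := by
  have hdΔ1 : 1 ≤ d + Δ := by omega
  have hOBZ : (OBc : ℤ) + 2 * (i : ℤ) = (d : ℤ) * (n : ℤ) := by exact_mod_cast hOBsum
  have haL : (d : ℤ) * ↑n - 2 * ↑i - 6 ≤ (Ac : ℤ) := by
    have h2 : (OBc : ℤ) ≤ (Ac : ℤ) + 6 := by exact_mod_cast hOBA
    linarith
  have hT'Z : (Ac : ℤ) ^ 4 ≤ (T'c : ℤ) + 12 * (Ac : ℤ) ^ 3 := by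
    rw [hAPY] at hT'low
    have h1 := (Nat.cast_le (α := ℤ)).2 hT'low
    push_cast at h1
    linarith [h1]
  have hTZ : (T'c : ℤ) ≤ (SFc : ℤ) + ((F1c : ℤ) + (F2c : ℤ) +
      (F3c : ℤ) + (F4c : ℤ) + (F5c : ℤ) + (F6c : ℤ)) := by
    have h1 := (Nat.cast_le (α := ℤ)).2 hTcard
    push_cast at h1
    linarith
  have hF1Z : (F1c : ℤ) ≤ (((d : ℤ) + Δ) * d) * (((d : ℤ) * n) * (((d : ℤ) * n) *
      ((d : ℤ) * n))) := by
    have h1 := (Nat.cast_le (α := ℤ)).2 hF1b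
    push_cast at h1
    linarith
  have hF2Z : (F2c : ℤ) ≤ ((d : ℤ) * n) * ((((d : ℤ) + Δ - 1) * d) * (((d : ℤ) * n) *
      ((d : ℤ) * n))) := by
    have h1 := (Nat.cast_le (α := ℤ)).2 hF2b
    push_cast [Nat.cast_sub hdΔ1] at h1
    linarith
  have hF3Z : (F3c : ℤ) ≤ ((d : ℤ) * n) * (((d : ℤ) * n) * ((((d : ℤ) + Δ - 1) * d) *
      ((d : ℤ) * n))) := by
    have h1 := (Nat.cast_le (α := ℤ)).2 hF3b
    push_cast [Nat.cast_sub hdΔ1] at h1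
    linarith
  have hF4Z : (F4c : ℤ) ≤ ((d : ℤ) * n) * (((d : ℤ) * n) * (((d : ℤ) * n) *
      (((d : ℤ) + Δ) * d))) := by
    have h1 := (Nat.cast_le (α := ℤ)).2 hF4b
    push_cast at h1
    linarith
  have hF5Z : (F5c : ℤ) ≤ (((d : ℤ) * d + Δ * d + ((d : ℤ) - 1)) * (((d : ℤ) * n) *
      ((d : ℤ) * n))) * ((d : ℤ) * n) := by
    have h1 := (Nat.cast_le (α := ℤ)).2 hF5b
    push_cast [Nat.cast_sub hd] at h1
    linarith
  have hF6Z : (F6c : ℤ) ≤ (((d : ℤ) * d + Δ * d + ((d : ℤ) - 1)) * (((d : ℤ) * n) *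
      ((d : ℤ) * n))) * ((d : ℤ) * n) := by
    have h1 := (Nat.cast_le (α := ℤ)).2 hF6b
    push_cast [Nat.cast_sub hd] at h1
    linarith
  have hSF0 : (0 : ℤ) ≤ (SFc : ℤ) := Int.natCast_nonneg _
  have hdnZ : 2 * (i : ℤ) + 12 ≤ (d : ℤ) * n := by exact_mod_cast hdn
  have hdZ : (1 : ℤ) ≤ (d : ℤ) := by exact_mod_cast hd
  have hΔZ : (1 : ℤ) ≤ (Δ : ℤ) := by exact_mod_cast hΔ1
  have hiZ : (0 : ℤ) ≤ (i : ℤ) := Int.natCast_nonneg _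
  have hDN3nn : (0 : ℤ) ≤ ((d : ℤ) * n) ^ 3 := by positivity
  constructor
  · rcases le_or_gt ((d : ℤ) * ↑n - 2 * ↑i - 12) 7 with hm | hm
    · have hm0 : (0 : ℤ) ≤ (d : ℤ) * ↑n - 2 * ↑i - 12 := by linarith
      have h2401 : ((d : ℤ) * ↑n - 2 * ↑i - 12) ^ 4 ≤ 2401 := by
        calc ((d : ℤ) * ↑n - 2 * ↑i - 12) ^ 4 ≤ 7 ^ 4 := pow_le_pow_left₀ hm0 hm 4
          _ = 2401 := by norm_num
      have hDN12 : (12 : ℤ) ≤ (d : ℤ) * n := by linarith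
      have hDN3 : (1728 : ℤ) ≤ ((d : ℤ) * n) ^ 3 := by
        have := pow_le_pow_left₀ (by norm_num : (0:ℤ) ≤ 12) hDN12 3
        norm_num at this
        linarith
      have hd2 : (1 : ℤ) ≤ (d : ℤ) ^ 2 := by nlinarith [hdZ]
      have hq1 : ((d : ℤ) * n) ^ 3 * 1 ≤ ((d : ℤ) * n) ^ 3 * (d : ℤ) ^ 2 :=
        mul_le_mul_of_nonneg_left hd2 hDN3nn
      have hq2 : (0 : ℤ) ≤ ((d : ℤ) * n) ^ 3 * Δ * d := by positivity
      linarith [h2401, hDN3, hq1, hq2, hSF0]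
    · set aZ := (Ac : ℤ) with haZ_def
      set tZ := (d : ℤ) * ↑n - 2 * ↑i - 6 with htZ_def
      have hat : tZ ≤ aZ := haL
      have h14 : (14 : ℤ) ≤ tZ := by rw [htZ_def]; linarith
      have ha14 : (14 : ℤ) ≤ aZ := by linarith
      have key1 : tZ ^ 4 - 12 * tZ ^ 3 ≤ aZ ^ 4 - 12 * aZ ^ 3 := by
        have q1 : (0 : ℤ) ≤ aZ ^ 2 * (aZ - 12) :=
          mul_nonneg (sq_nonneg aZ) (by linarith)
        have q2 : (0 : ℤ) ≤ (aZ * tZ) * (aZ - 12) :=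
          mul_nonneg (mul_nonneg (by linarith) (by linarith)) (by linarith)
        have q3 : (0 : ℤ) ≤ tZ ^ 2 * (aZ - 12) :=
          mul_nonneg (sq_nonneg tZ) (by linarith)
        have q4 : (0 : ℤ) ≤ tZ ^ 3 := by positivity
        have hsecond : (0 : ℤ) ≤ aZ ^ 3 + aZ ^ 2 * tZ + aZ * tZ ^ 2 + tZ ^ 3 -
            12 * aZ ^ 2 - 12 * aZ * tZ - 12 * tZ ^ 2 := by linarith [q1, q2, q3, q4]
        linarith [mul_nonneg (sub_nonneg.2 hat) hsecond]
      have key2 : ((d : ℤ) * ↑n - 2 * ↑i - 12) ^ 4 ≤ tZ ^ 4 - 12 * tZ ^ 3 := by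
        have hu : (0 : ℤ) ≤ tZ - 14 := by linarith
        have hm12 : (d : ℤ) * ↑n - 2 * ↑i - 12 = tZ - 6 := by rw [htZ_def]; ring
        rw [hm12]
        linarith [pow_nonneg hu 3, sq_nonneg (tZ - 14), hu]
      have hFsum : (F1c : ℤ) + F2c + F3c + F4c + F5c + F6c ≤
          (6 * (d : ℤ) ^ 2 + 6 * (Δ : ℤ) * (d : ℤ) - 2) * ((d : ℤ) * n) ^ 3 := by
        have hring : (((d : ℤ) + Δ) * d) * (((d : ℤ) * n) * (((d : ℤ) * n) *
              ((d : ℤ) * n))) +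
            ((d : ℤ) * n) * ((((d : ℤ) + Δ - 1) * d) * (((d : ℤ) * n) * ((d : ℤ) * n))) +
            ((d : ℤ) * n) * (((d : ℤ) * n) * ((((d : ℤ) + Δ - 1) * d) * ((d : ℤ) * n))) +
            ((d : ℤ) * n) * (((d : ℤ) * n) * (((d : ℤ) * n) * (((d : ℤ) + Δ) * d))) +
            (((d : ℤ) * d + Δ * d + ((d : ℤ) - 1)) * (((d : ℤ) * n) * ((d : ℤ) * n))) *
              ((d : ℤ) * n) +
            (((d : ℤ) * d + Δ * d + ((d : ℤ) - 1)) * (((d : ℤ) * n) * ((d : ℤ) * n))) *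
              ((d : ℤ) * n) =
            (6 * (d : ℤ) ^ 2 + 6 * (Δ : ℤ) * (d : ℤ) - 2) * ((d : ℤ) * n) ^ 3 := by
          ring
        linarith [hF1Z, hF2Z, hF3Z, hF4Z, hF5Z, hF6Z, hring]
      have hSFlow : aZ ^ 4 - 12 * aZ ^ 3 -
          (6 * (d : ℤ) ^ 2 + 6 * (Δ : ℤ) * (d : ℤ) - 2) * ((d : ℤ) * n) ^ 3 ≤ (SFc : ℤ) := by
        linarith [hT'Z, hTZ, hFsum]
      linarith [key1, key2, hSFlow, hDN3nn]
  · have h1 := (Nat.cast_le (α := ℤ)).2 hSFUB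
    push_cast at h1
    linarith [h1]


set_option maxHeartbeats 4000000 in
/-- Lemma 11 for Type IIb+. Suppose `H` is `(n-Δ-1)`-regular, `G` is
`d`-regular with exactly `i` red edges, `dn ≥ 2i + 12`, and `(v0,…,v7)` is a Type IIb+
octagon in `G`. Then `(dn−2i−12)⁴ − 6(dn)³d² − 6(dn)³Δd ≤ b̂(G,v) ≤ (dn)⁴`. -/
theorem stmt_13 (n d Δ i : ℕ) (hd : 1 ≤ d) (hΔ1 : 1 ≤ Δ) (hΔ2 : Δ ≤ n - 1)
    (H : SimpleGraph (Fin n)) (hH : H.IsRegularOfDegree (n - Δ - 1))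
    (hdn : 2 * i + 12 ≤ d * n)
    (G : SimpleGraph (Fin n)) (hreg : G.IsRegularOfDegree d)
    (hred : (G ⊓ Hᶜ).edgeSet.ncard = i)
    (v0 v1 v2 v3 v4 v5 v6 v7 : Fin n)
    (hoct : OctIIbPlus H G v0 v1 v2 v3 v4 v5 v6 v7) :
    ((d * n - 2 * i - 12 : ℤ) ^ 4 - 6 * (d * n) ^ 3 * d ^ 2
        - 6 * (d * n) ^ 3 * Δ * d) ≤
        (bhatIIb H G v0 v1 v2 v3 v4 v5 v6 v7 : ℤ) ∧
      (bhatIIb H G v0 v1 v2 v3 v4 v5 v6 v7 : ℤ) ≤ (d * n : ℤ) ^ 4 := by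

  classical
  obtain ⟨⟨h01G, h01R⟩, ⟨h12G, h12R⟩, ⟨h07G, h07B⟩, ⟨h34G, h34B⟩, ⟨h56G, h56B⟩,
    ⟨h23G, h23B⟩, ⟨h45G, h45B⟩, ⟨h67G, h67B⟩, hdist⟩ := hoct
  have hv20 : v2 ≠ v0 := (hdist.2 v0 (by simp)).1
  have hnpos : 0 < n := v0.pos
  have hΔn : Δ + 1 ≤ n := by omega
  -- ordered-pair sets
  set OE := (univ.filter fun p : Fin n × Fin n => G.Adj p.1 p.2) with hOE_def
  set OB := (univ.filter fun p : Fin n × Fin n => G.Adj p.1 p.2 ∧ H.Adj p.1 p.2) with hOB_def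
  set ORd := (univ.filter fun p : Fin n × Fin n => G.Adj p.1 p.2 ∧ Hᶜ.Adj p.1 p.2) with hORd_def
  set A := (OB.filter fun p => s(p.1, p.2) ≠ s(v0, v7) ∧ s(p.1, p.2) ≠ s(v3, v4) ∧
    s(p.1, p.2) ≠ s(v5, v6)) with hA_def
  have hOEcard : OE.card = d * n := cardOE G hreg
  have hORcard : ORd.card = 2 * i := cardOR G H i hred
  have hOEsplit : OE.card = OB.card + ORd.card := by
    have hunion : OE = OB ∪ ORd := by
      ext p
      simp only [hOE_def, hOB_def, hORd_def, mem_union, mem_filter, mem_univ, true_and]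
      constructor
      · intro hG
        by_cases hHp : H.Adj p.1 p.2
        · exact Or.inl ⟨hG, hHp⟩
        · exact Or.inr ⟨hG, (compl_adj _ _ _).2 ⟨hG.ne, hHp⟩⟩
      · rintro (⟨hG, _⟩ | ⟨hG, _⟩) <;> exact hG
    have hdisj : Disjoint OB ORd := by
      rw [Finset.disjoint_left]
      intro p h1 h2
      simp only [hOB_def, hORd_def, mem_filter, mem_univ, true_and] at h1 h2
      exact ((compl_adj _ _ _).1 h2.2).2 h1.2
    rw [hunion, card_union_of_disjoint hdisj]
  have hOBOE : OB ⊆ OE := by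
    intro p hp
    simp only [hOB_def, hOE_def, mem_filter, mem_univ, true_and] at hp ⊢
    exact hp.1
  have hAOB : A ⊆ OB := filter_subset _ _
  have hOBcardA : OB.card ≤ A.card + 6 := by
    have hsub : OB ⊆ A ∪ ([(v0, v7), (v7, v0), (v3, v4), (v4, v3), (v5, v6),
        (v6, v5)].toFinset) := by
      intro p hp
      by_cases hpA : p ∈ A
      · exact mem_union_left _ hpA
      · refine mem_union_right _ ?_
        have h3 : s(p.1, p.2) = s(v0, v7) ∨ s(p.1, p.2) = s(v3, v4) ∨
            s(p.1, p.2) = s(v5, v6) := by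
          by_contra hc
          push_neg at hc
          exact hpA (by
            rw [hA_def, mem_filter]
            exact ⟨hp, hc.1, hc.2.1, hc.2.2⟩)
        simp only [List.mem_toFinset, List.mem_cons, List.not_mem_nil, or_false]
        rcases h3 with h | h | h <;>
          rcases Sym2.eq_iff.1 h with ⟨e1, e2⟩ | ⟨e1, e2⟩ <;>
            rcases p with ⟨pa, pb⟩ <;> simp_all
    calc OB.card ≤ _ := card_le_card hsub
      _ ≤ A.card + ([(v0, v7), (v7, v0), (v3, v4), (v4, v3), (v5, v6),
          (v6, v5)].toFinset).card := card_union_le _ _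
      _ ≤ A.card + 6 := by
          have := ([(v0, v7), (v7, v0), (v3, v4), (v4, v3), (v5, v6),
            (v6, v5)]).toFinset_card_le
          simp only [List.length] at this
          omega
  -- the tuple projection
  set pr := (fun y : Fin 8 → Fin n => ((y 0, y 1), (y 2, y 3), (y 4, y 5), (y 6, y 7)))
    with hpr_def
  have hprinj : Function.Injective pr := by
    intro y z h
    simp only [hpr_def, Prod.mk.injEq] at h
    obtain ⟨⟨e0, e1⟩, ⟨e2, e3⟩, ⟨e4, e5⟩, ⟨e6, e7⟩⟩ := h
    funext j
    fin_cases j <;> assumption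
  -- the main counted set
  set SF := (univ.filter fun y : Fin 8 → Fin n =>
    (G.Adj (y 0) (y 1) ∧ H.Adj (y 0) (y 1)) ∧
    (G.Adj (y 2) (y 3) ∧ H.Adj (y 2) (y 3)) ∧
    (G.Adj (y 4) (y 5) ∧ H.Adj (y 4) (y 5)) ∧
    (G.Adj (y 6) (y 7) ∧ H.Adj (y 6) (y 7)) ∧
    List.Pairwise (· ≠ ·)
      [s(y 0, y 1), s(y 2, y 3), s(y 4, y 5), s(y 6, y 7)] ∧
    (∀ e ∈ [s(y 0, y 1), s(y 2, y 3), s(y 4, y 5), s(y 6, y 7)],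
      e ≠ s(v0, v7) ∧ e ≠ s(v3, v4) ∧ e ≠ s(v5, v6)) ∧
    (¬ G.Adj v0 (y 0) ∧ H.Adj v0 (y 0)) ∧
    (¬ G.Adj v1 (y 2) ∧ H.Adj v1 (y 2)) ∧
    (¬ G.Adj v1 (y 4) ∧ H.Adj v1 (y 4)) ∧
    (¬ G.Adj v2 (y 6) ∧ H.Adj v2 (y 6)) ∧
    (¬ G.Adj (y 1) (y 3) ∧ H.Adj (y 1) (y 3)) ∧
    (¬ G.Adj (y 5) (y 7) ∧ H.Adj (y 5) (y 7))) with hSF_def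
  have hbhat : bhatIIb H G v0 v1 v2 v3 v4 v5 v6 v7 = SF.card := by
    rw [bhatIIb, Nat.card_eq_fintype_card, Fintype.card_subtype, hSF_def]
  -- tuple sets
  set APY := (univ.filter fun y : Fin 8 → Fin n =>
    (y 0, y 1) ∈ A ∧ (y 2, y 3) ∈ A ∧ (y 4, y 5) ∈ A ∧ (y 6, y 7) ∈ A) with hAPY_def
  set T' := (APY.filter fun y : Fin 8 → Fin n =>
    s(y 0, y 1) ≠ s(y 2, y 3) ∧ s(y 0, y 1) ≠ s(y 4, y 5) ∧ s(y 0, y 1) ≠ s(y 6, y 7) ∧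
    s(y 2, y 3) ≠ s(y 4, y 5) ∧ s(y 2, y 3) ≠ s(y 6, y 7) ∧
    s(y 4, y 5) ≠ s(y 6, y 7)) with hT_def
  have hmemA : ∀ p : Fin n × Fin n, p ∈ A ↔ (G.Adj p.1 p.2 ∧ H.Adj p.1 p.2) ∧
      s(p.1, p.2) ≠ s(v0, v7) ∧ s(p.1, p.2) ≠ s(v3, v4) ∧ s(p.1, p.2) ≠ s(v5, v6) := by
    intro p
    simp only [hA_def, hOB_def, mem_filter, mem_univ, true_and]
  have hSFT : SF ⊆ T' := by
    intro y hy
    simp only [hSF_def, mem_filter, mem_univ, true_and] at hy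
    obtain ⟨hb1, hb2, hb3, hb4, hpw, hfor, _⟩ := hy
    simp only [List.pairwise_cons, List.mem_cons, List.not_mem_nil, or_false,
      List.mem_singleton, forall_eq_or_imp, forall_eq, List.Pairwise.nil,
      and_true] at hpw
    simp only [List.forall_mem_cons, List.forall_mem_nil, and_true] at hfor
    obtain ⟨hf1, hf2, hf3, hf4⟩ := hfor
    simp only [hT_def, hAPY_def, mem_filter, mem_univ, true_and]
    refine ⟨⟨?_, ?_, ?_, ?_⟩, ?_, ?_, ?_, ?_, ?_, ?_⟩
    · exact (hmemA _).2 ⟨hb1, hf1⟩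
    · exact (hmemA _).2 ⟨hb2, hf2⟩
    · exact (hmemA _).2 ⟨hb3, hf3⟩
    · exact (hmemA _).2 ⟨hb4, hf4.1⟩
    · exact hpw.1.1
    · exact hpw.1.2.1
    · exact hpw.1.2.2
    · exact hpw.2.1.1
    · exact hpw.2.1.2
    · exact hpw.2.2.1
  -- failure sets
  set F1 := (T'.filter fun y : Fin 8 → Fin n =>
    ¬ (¬ G.Adj v0 (y 0) ∧ H.Adj v0 (y 0))) with hF1_def
  set F2 := (T'.filter fun y : Fin 8 → Fin n =>
    ¬ (¬ G.Adj v1 (y 2) ∧ H.Adj v1 (y 2))) with hF2_def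
  set F3 := (T'.filter fun y : Fin 8 → Fin n =>
    ¬ (¬ G.Adj v1 (y 4) ∧ H.Adj v1 (y 4))) with hF3_def
  set F4 := (T'.filter fun y : Fin 8 → Fin n =>
    ¬ (¬ G.Adj v2 (y 6) ∧ H.Adj v2 (y 6))) with hF4_def
  set F5 := (T'.filter fun y : Fin 8 → Fin n =>
    ¬ (¬ G.Adj (y 1) (y 3) ∧ H.Adj (y 1) (y 3))) with hF5_def
  set F6 := (T'.filter fun y : Fin 8 → Fin n =>
    ¬ (¬ G.Adj (y 5) (y 7) ∧ H.Adj (y 5) (y 7))) with hF6_def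
  have hcover : T' ⊆ SF ∪ (F1 ∪ (F2 ∪ (F3 ∪ (F4 ∪ (F5 ∪ F6))))) := by
    intro y hy
    by_cases c1 : ¬ G.Adj v0 (y 0) ∧ H.Adj v0 (y 0)
    case neg =>
      exact mem_union_right _ (mem_union_left _ (mem_filter.2 ⟨hy, c1⟩))
    by_cases c2 : ¬ G.Adj v1 (y 2) ∧ H.Adj v1 (y 2)
    case neg =>
      exact mem_union_right _ (mem_union_right _ (mem_union_left _ (mem_filter.2 ⟨hy, c2⟩)))
    by_cases c3 : ¬ G.Adj v1 (y 4) ∧ H.Adj v1 (y 4)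
    case neg =>
      exact mem_union_right _ (mem_union_right _ (mem_union_right _ (mem_union_left _
        (mem_filter.2 ⟨hy, c3⟩))))
    by_cases c4 : ¬ G.Adj v2 (y 6) ∧ H.Adj v2 (y 6)
    case neg =>
      exact mem_union_right _ (mem_union_right _ (mem_union_right _ (mem_union_right _
        (mem_union_left _ (mem_filter.2 ⟨hy, c4⟩)))))
    by_cases c5 : ¬ G.Adj (y 1) (y 3) ∧ H.Adj (y 1) (y 3)
    case neg =>
      exact mem_union_right _ (mem_union_right _ (mem_union_right _ (mem_union_right _
        (mem_union_right _ (mem_union_left _ (mem_filter.2 ⟨hy, c5⟩))))))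
    by_cases c6 : ¬ G.Adj (y 5) (y 7) ∧ H.Adj (y 5) (y 7)
    case neg =>
      exact mem_union_right _ (mem_union_right _ (mem_union_right _ (mem_union_right _
        (mem_union_right _ (mem_union_right _ (mem_filter.2 ⟨hy, c6⟩))))))
    -- all conditions hold: y ∈ SF
    refine mem_union_left _ ?_
    simp only [hT_def, hAPY_def, mem_filter, mem_univ, true_and] at hy
    obtain ⟨⟨ha1, ha2, ha3, ha4⟩, d12, d13, d14, d23, d24, d34⟩ := hy
    have hA1 := (hmemA _).1 ha1
    have hA2 := (hmemA _).1 ha2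
    have hA3 := (hmemA _).1 ha3
    have hA4 := (hmemA _).1 ha4
    simp only [hSF_def, mem_filter, mem_univ, true_and]
    refine ⟨hA1.1, hA2.1, hA3.1, hA4.1, ?_, ?_, c1, c2, c3, c4, c5, c6⟩
    · refine List.Pairwise.cons (fun e he => ?_) (List.Pairwise.cons (fun e he => ?_)
        (List.Pairwise.cons (fun e he => ?_) (List.pairwise_singleton _ _)))
      · simp only [List.mem_cons, List.not_mem_nil, or_false] at he
        rcases he with rfl | rfl | rfl
        exacts [d12, d13, d14]
      · simp only [List.mem_cons, List.not_mem_nil, or_false] at he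
        rcases he with rfl | rfl
        exacts [d23, d24]
      · simp only [List.mem_cons, List.not_mem_nil, or_false] at he
        rcases he with rfl
        exact d34
    · intro e he
      simp only [List.mem_cons, List.not_mem_nil, or_false] at he
      rcases he with rfl | rfl | rfl | rfl
      exacts [hA1.2, hA2.2, hA3.2, hA4.2]
  have hTcard : T'.card ≤ SF.card + (F1.card + (F2.card + (F3.card + (F4.card +
      (F5.card + F6.card))))) := by
    calc T'.card ≤ (SF ∪ (F1 ∪ (F2 ∪ (F3 ∪ (F4 ∪ (F5 ∪ F6)))))).card := card_le_card hcover
      _ ≤ _ := by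
        refine le_trans (card_union_le _ _) (Nat.add_le_add_left ?_ _)
        refine le_trans (card_union_le _ _) (Nat.add_le_add_left ?_ _)
        refine le_trans (card_union_le _ _) (Nat.add_le_add_left ?_ _)
        refine le_trans (card_union_le _ _) (Nat.add_le_add_left ?_ _)
        refine le_trans (card_union_le _ _) (Nat.add_le_add_left ?_ _)
        exact card_union_le _ _
  -- cardinality of APY
  have hAPYcard : APY.card = A.card * (A.card * (A.card * A.card)) := by
    have hbij : APY.card = (A ×ˢ (A ×ˢ (A ×ˢ A))).card := by
      refine card_nbij' pr (fun q => ![q.1.1, q.1.2, q.2.1.1, q.2.1.2, q.2.2.1.1,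
        q.2.2.1.2, q.2.2.2.1, q.2.2.2.2]) ?_ ?_ ?_ ?_
      · intro y hy
        simp only [mem_coe, hAPY_def, mem_filter, mem_univ, true_and] at hy
        simp only [mem_coe, hpr_def, mem_product]
        exact ⟨hy.1, hy.2.1, hy.2.2.1, hy.2.2.2⟩
      · intro q hq
        simp only [mem_coe, mem_product] at hq
        simp only [mem_coe, hAPY_def, mem_filter, mem_univ, true_and]
        exact ⟨hq.1, hq.2.1, hq.2.2.1, hq.2.2.2⟩
      · intro y _
        funext j
        fin_cases j <;> rfl
      · intro q _
        rfl
    rw [hbij, card_product, card_product, card_product]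
  -- coincidence sets
  set EQ12 := (APY.filter fun y : Fin 8 → Fin n => s(y 2, y 3) = s(y 0, y 1)) with hEQ12_def
  set EQ13 := (APY.filter fun y : Fin 8 → Fin n => s(y 4, y 5) = s(y 0, y 1)) with hEQ13_def
  set EQ14 := (APY.filter fun y : Fin 8 → Fin n => s(y 6, y 7) = s(y 0, y 1)) with hEQ14_def
  set EQ23 := (APY.filter fun y : Fin 8 → Fin n => s(y 4, y 5) = s(y 2, y 3)) with hEQ23_def
  set EQ24 := (APY.filter fun y : Fin 8 → Fin n => s(y 6, y 7) = s(y 2, y 3)) with hEQ24_def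
  set EQ34 := (APY.filter fun y : Fin 8 → Fin n => s(y 6, y 7) = s(y 4, y 5)) with hEQ34_def
  have hAPYsub : APY ⊆ T' ∪ (EQ12 ∪ (EQ13 ∪ (EQ14 ∪ (EQ23 ∪ (EQ24 ∪ EQ34))))) := by
    intro y hy
    by_cases d12 : s(y 0, y 1) = s(y 2, y 3)
    · exact mem_union_right _ (mem_union_left _ (mem_filter.2 ⟨hy, d12.symm⟩))
    by_cases d13 : s(y 0, y 1) = s(y 4, y 5)
    · exact mem_union_right _ (mem_union_right _ (mem_union_left _
        (mem_filter.2 ⟨hy, d13.symm⟩)))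
    by_cases d14 : s(y 0, y 1) = s(y 6, y 7)
    · exact mem_union_right _ (mem_union_right _ (mem_union_right _ (mem_union_left _
        (mem_filter.2 ⟨hy, d14.symm⟩))))
    by_cases d23 : s(y 2, y 3) = s(y 4, y 5)
    · exact mem_union_right _ (mem_union_right _ (mem_union_right _ (mem_union_right _
        (mem_union_left _ (mem_filter.2 ⟨hy, d23.symm⟩)))))
    by_cases d24 : s(y 2, y 3) = s(y 6, y 7)
    · exact mem_union_right _ (mem_union_right _ (mem_union_right _ (mem_union_right _
        (mem_union_right _ (mem_union_left _ (mem_filter.2 ⟨hy, d24.symm⟩))))))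
    by_cases d34 : s(y 4, y 5) = s(y 6, y 7)
    · exact mem_union_right _ (mem_union_right _ (mem_union_right _ (mem_union_right _
        (mem_union_right _ (mem_union_right _ (mem_filter.2 ⟨hy, d34.symm⟩))))))
    exact mem_union_left _ (by
      rw [hT_def, mem_filter]
      exact ⟨hy, d12, d13, d14, d23, d24, d34⟩)
  -- bounds on the coincidence sets
  have hA3maps : ∀ (y : Fin 8 → Fin n), y ∈ APY →
      ((y 0, y 1) ∈ A ∧ (y 2, y 3) ∈ A ∧ (y 4, y 5) ∈ A ∧ (y 6, y 7) ∈ A) := by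
    intro y hy
    simp only [hAPY_def, mem_filter, mem_univ, true_and] at hy
    exact hy
  have hEQb12 : EQ12.card ≤ 2 * (A.card * (A.card * A.card)) := by
    have h := two_fiber_le EQ12 (A ×ˢ (A ×ˢ A))
      (fun y => ((y 0, y 1), ((y 4, y 5), (y 6, y 7)))) (fun y => (y 2, y 3)) Prod.fst
      (fun y hy => by
        have := hA3maps y (filter_subset _ _ hy)
        simp only [mem_product]
        exact ⟨this.1, this.2.2.1, this.2.2.2⟩)
      (fun y hy z hz hf hg => by
        have e0 : y 0 = z 0 := congrArg (fun t => t.1.1) hf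
        have e1 : y 1 = z 1 := congrArg (fun t => t.1.2) hf
        have e4 : y 4 = z 4 := congrArg (fun t => t.2.1.1) hf
        have e5 : y 5 = z 5 := congrArg (fun t => t.2.1.2) hf
        have e6 : y 6 = z 6 := congrArg (fun t => t.2.2.1) hf
        have e7 : y 7 = z 7 := congrArg (fun t => t.2.2.2) hf
        have e2 : y 2 = z 2 := congrArg (fun t => t.1) hg
        have e3 : y 3 = z 3 := congrArg (fun t => t.2) hg
        funext j
        fin_cases j <;> assumption)
      (fun y hy => by
        simp only [hEQ12_def, mem_filter] at hy
        exact hy.2)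
    rwa [card_product, card_product] at h
  have hEQb13 : EQ13.card ≤ 2 * (A.card * (A.card * A.card)) := by
    have h := two_fiber_le EQ13 (A ×ˢ (A ×ˢ A))
      (fun y => ((y 0, y 1), ((y 2, y 3), (y 6, y 7)))) (fun y => (y 4, y 5)) Prod.fst
      (fun y hy => by
        have := hA3maps y (filter_subset _ _ hy)
        simp only [mem_product]
        exact ⟨this.1, this.2.1, this.2.2.2⟩)
      (fun y hy z hz hf hg => by
        have e0 : y 0 = z 0 := congrArg (fun t => t.1.1) hf
        have e1 : y 1 = z 1 := congrArg (fun t => t.1.2) hf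
        have e2 : y 2 = z 2 := congrArg (fun t => t.2.1.1) hf
        have e3 : y 3 = z 3 := congrArg (fun t => t.2.1.2) hf
        have e6 : y 6 = z 6 := congrArg (fun t => t.2.2.1) hf
        have e7 : y 7 = z 7 := congrArg (fun t => t.2.2.2) hf
        have e4 : y 4 = z 4 := congrArg (fun t => t.1) hg
        have e5 : y 5 = z 5 := congrArg (fun t => t.2) hg
        funext j
        fin_cases j <;> assumption)
      (fun y hy => by
        simp only [hEQ13_def, mem_filter] at hy
        exact hy.2)
    rwa [card_product, card_product] at h
  have hEQb14 : EQ14.card ≤ 2 * (A.card * (A.card * A.card)) := by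
    have h := two_fiber_le EQ14 (A ×ˢ (A ×ˢ A))
      (fun y => ((y 0, y 1), ((y 2, y 3), (y 4, y 5)))) (fun y => (y 6, y 7)) Prod.fst
      (fun y hy => by
        have := hA3maps y (filter_subset _ _ hy)
        simp only [mem_product]
        exact ⟨this.1, this.2.1, this.2.2.1⟩)
      (fun y hy z hz hf hg => by
        have e0 : y 0 = z 0 := congrArg (fun t => t.1.1) hf
        have e1 : y 1 = z 1 := congrArg (fun t => t.1.2) hf
        have e2 : y 2 = z 2 := congrArg (fun t => t.2.1.1) hf
        have e3 : y 3 = z 3 := congrArg (fun t => t.2.1.2) hf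
        have e4 : y 4 = z 4 := congrArg (fun t => t.2.2.1) hf
        have e5 : y 5 = z 5 := congrArg (fun t => t.2.2.2) hf
        have e6 : y 6 = z 6 := congrArg (fun t => t.1) hg
        have e7 : y 7 = z 7 := congrArg (fun t => t.2) hg
        funext j
        fin_cases j <;> assumption)
      (fun y hy => by
        simp only [hEQ14_def, mem_filter] at hy
        exact hy.2)
    rwa [card_product, card_product] at h
  have hEQb23 : EQ23.card ≤ 2 * (A.card * (A.card * A.card)) := by
    have h := two_fiber_le EQ23 (A ×ˢ (A ×ˢ A))
      (fun y => ((y 2, y 3), ((y 0, y 1), (y 6, y 7)))) (fun y => (y 4, y 5)) Prod.fst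
      (fun y hy => by
        have := hA3maps y (filter_subset _ _ hy)
        simp only [mem_product]
        exact ⟨this.2.1, this.1, this.2.2.2⟩)
      (fun y hy z hz hf hg => by
        have e2 : y 2 = z 2 := congrArg (fun t => t.1.1) hf
        have e3 : y 3 = z 3 := congrArg (fun t => t.1.2) hf
        have e0 : y 0 = z 0 := congrArg (fun t => t.2.1.1) hf
        have e1 : y 1 = z 1 := congrArg (fun t => t.2.1.2) hf
        have e6 : y 6 = z 6 := congrArg (fun t => t.2.2.1) hf
        have e7 : y 7 = z 7 := congrArg (fun t => t.2.2.2) hf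
        have e4 : y 4 = z 4 := congrArg (fun t => t.1) hg
        have e5 : y 5 = z 5 := congrArg (fun t => t.2) hg
        funext j
        fin_cases j <;> assumption)
      (fun y hy => by
        simp only [hEQ23_def, mem_filter] at hy
        exact hy.2)
    rwa [card_product, card_product] at h
  have hEQb24 : EQ24.card ≤ 2 * (A.card * (A.card * A.card)) := by
    have h := two_fiber_le EQ24 (A ×ˢ (A ×ˢ A))
      (fun y => ((y 2, y 3), ((y 0, y 1), (y 4, y 5)))) (fun y => (y 6, y 7)) Prod.fst
      (fun y hy => by
        have := hA3maps y (filter_subset _ _ hy)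
        simp only [mem_product]
        exact ⟨this.2.1, this.1, this.2.2.1⟩)
      (fun y hy z hz hf hg => by
        have e2 : y 2 = z 2 := congrArg (fun t => t.1.1) hf
        have e3 : y 3 = z 3 := congrArg (fun t => t.1.2) hf
        have e0 : y 0 = z 0 := congrArg (fun t => t.2.1.1) hf
        have e1 : y 1 = z 1 := congrArg (fun t => t.2.1.2) hf
        have e4 : y 4 = z 4 := congrArg (fun t => t.2.2.1) hf
        have e5 : y 5 = z 5 := congrArg (fun t => t.2.2.2) hf
        have e6 : y 6 = z 6 := congrArg (fun t => t.1) hg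
        have e7 : y 7 = z 7 := congrArg (fun t => t.2) hg
        funext j
        fin_cases j <;> assumption)
      (fun y hy => by
        simp only [hEQ24_def, mem_filter] at hy
        exact hy.2)
    rwa [card_product, card_product] at h
  have hEQb34 : EQ34.card ≤ 2 * (A.card * (A.card * A.card)) := by
    have h := two_fiber_le EQ34 (A ×ˢ (A ×ˢ A))
      (fun y => ((y 4, y 5), ((y 0, y 1), (y 2, y 3)))) (fun y => (y 6, y 7)) Prod.fst
      (fun y hy => by
        have := hA3maps y (filter_subset _ _ hy)
        simp only [mem_product]
        exact ⟨this.2.2.1, this.1, this.2.1⟩)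
      (fun y hy z hz hf hg => by
        have e4 : y 4 = z 4 := congrArg (fun t => t.1.1) hf
        have e5 : y 5 = z 5 := congrArg (fun t => t.1.2) hf
        have e0 : y 0 = z 0 := congrArg (fun t => t.2.1.1) hf
        have e1 : y 1 = z 1 := congrArg (fun t => t.2.1.2) hf
        have e2 : y 2 = z 2 := congrArg (fun t => t.2.2.1) hf
        have e3 : y 3 = z 3 := congrArg (fun t => t.2.2.2) hf
        have e6 : y 6 = z 6 := congrArg (fun t => t.1) hg
        have e7 : y 7 = z 7 := congrArg (fun t => t.2) hg
        funext j
        fin_cases j <;> assumption)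
      (fun y hy => by
        simp only [hEQ34_def, mem_filter] at hy
        exact hy.2)
    rwa [card_product, card_product] at h
  have hT'low : APY.card ≤ T'.card + 12 * (A.card * (A.card * A.card)) := by
    have h := card_le_card hAPYsub
    have h2 : (T' ∪ (EQ12 ∪ (EQ13 ∪ (EQ14 ∪ (EQ23 ∪ (EQ24 ∪ EQ34)))))).card ≤
        T'.card + (EQ12.card + (EQ13.card + (EQ14.card + (EQ23.card +
          (EQ24.card + EQ34.card))))) := by
      refine le_trans (card_union_le _ _) (Nat.add_le_add_left ?_ _)
      refine le_trans (card_union_le _ _) (Nat.add_le_add_left ?_ _)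
      refine le_trans (card_union_le _ _) (Nat.add_le_add_left ?_ _)
      refine le_trans (card_union_le _ _) (Nat.add_le_add_left ?_ _)
      refine le_trans (card_union_le _ _) (Nat.add_le_add_left ?_ _)
      exact card_union_le _ _
    omega
  -- bad vertex sets
  have hnH01 : ¬ H.Adj v0 v1 := ((compl_adj _ _ _).1 h01R).2
  have hnH12 : ¬ H.Adj v1 v2 := ((compl_adj _ _ _).1 h12R).2
  set bad0 := (G.neighborFinset v0 ∪ (univ \ H.neighborFinset v0)) with hbad0_def
  set bad1 := (G.neighborFinset v1 ∪ (univ \ H.neighborFinset v1)) with hbad1_def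
  set bad2s := (G.neighborFinset v2 ∪ (univ \ H.neighborFinset v2)) with hbad2s_def
  have hbad0card : bad0.card ≤ d + Δ := by
    have h := badset_card_le G H hreg hH hΔn v0 {v1} (by
      intro x hx
      simp only [mem_singleton] at hx
      subst hx
      simp only [mem_inter, mem_neighborFinset, mem_sdiff, mem_univ, true_and]
      exact ⟨h01G, hnH01⟩)
    rw [← hbad0_def] at h
    simp only [card_singleton] at h
    omega
  have hbad1card : bad1.card ≤ d + Δ - 1 := by
    have h := badset_card_le G H hreg hH hΔn v1 {v0, v2} (by
      intro x hx
      simp only [mem_insert, mem_singleton] at hx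
      rcases hx with rfl | rfl <;>
        simp only [mem_inter, mem_neighborFinset, mem_sdiff, mem_univ, true_and]
      · exact ⟨h01G.symm, fun hh => hnH01 hh.symm⟩
      · exact ⟨h12G, hnH12⟩)
    rw [← hbad1_def] at h
    have h2 : ({v0, v2} : Finset (Fin n)).card = 2 := card_pair (fun hh => hv20 hh.symm)
    omega
  have hbad2scard : bad2s.card ≤ d + Δ := by
    have h := badset_card_le G H hreg hH hΔn v2 {v1} (by
      intro x hx
      simp only [mem_singleton] at hx
      subst hx
      simp only [mem_inter, mem_neighborFinset, mem_sdiff, mem_univ, true_and]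
      exact ⟨h12G.symm, fun hh => hnH12 hh.symm⟩)
    rw [← hbad2s_def] at h
    simp only [card_singleton] at h
    omega
  -- dependent-edge sets
  set X0 := (OE.filter fun p => p.1 ∈ bad0) with hX0_def
  set X1 := (OE.filter fun p => p.1 ∈ bad1) with hX1_def
  set X2 := (OE.filter fun p => p.1 ∈ bad2s) with hX2_def
  have hXcard : ∀ (B0 : Finset (Fin n)),
      (OE.filter fun p => p.1 ∈ B0).card ≤ B0.card * d := by
    intro B0
    refine fst_in_le G hreg B0 (fun p hp => ?_)
    simp only [mem_filter] at hp
    have hpOE := hp.1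
    simp only [hOE_def, mem_filter, mem_univ, true_and] at hpOE
    exact ⟨hpOE, hp.2⟩
  have hX0card : X0.card ≤ (d + Δ) * d :=
    le_trans (hXcard bad0) (Nat.mul_le_mul_right d hbad0card)
  have hX1card : X1.card ≤ (d + Δ - 1) * d :=
    le_trans (hXcard bad1) (Nat.mul_le_mul_right d hbad1card)
  have hX2card : X2.card ≤ (d + Δ) * d :=
    le_trans (hXcard bad2s) (Nat.mul_le_mul_right d hbad2scard)
  -- membership helpers for T'
  have hTmem : ∀ y ∈ T', (y 0, y 1) ∈ OE ∧ (y 2, y 3) ∈ OE ∧ (y 4, y 5) ∈ OE ∧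
      (y 6, y 7) ∈ OE := by
    intro y hy
    simp only [hT_def, hAPY_def, mem_filter, mem_univ, true_and] at hy
    exact ⟨hOBOE (hAOB hy.1.1), hOBOE (hAOB hy.1.2.1), hOBOE (hAOB hy.1.2.2.1),
      hOBOE (hAOB hy.1.2.2.2)⟩
  -- bounds on F1..F4
  have hF1b : F1.card ≤ ((d + Δ) * d) * ((d * n) * ((d * n) * (d * n))) := by
    have hsub : ∀ y ∈ F1, pr y ∈ X0 ×ˢ (OE ×ˢ (OE ×ˢ OE)) := by
      intro y hy
      simp only [hF1_def, mem_filter] at hy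
      obtain ⟨hyT, hc⟩ := hy
      obtain ⟨hOE1, hOE2, hOE3, hOE4⟩ := hTmem y hyT
      have hy0 : y 0 ∈ bad0 := by
        rw [hbad0_def, mem_union]
        by_cases hg : G.Adj v0 (y 0)
        · exact Or.inl (by rwa [mem_neighborFinset])
        · have hnh : ¬ H.Adj v0 (y 0) := fun hh => hc ⟨hg, hh⟩
          exact Or.inr (by simp [mem_sdiff, mem_neighborFinset, hnh])
      simp only [hpr_def, mem_product]
      exact ⟨mem_filter.2 ⟨hOE1, hy0⟩, hOE2, hOE3, hOE4⟩
    calc F1.card ≤ (X0 ×ˢ (OE ×ˢ (OE ×ˢ OE))).card :=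
        card_le_card_of_injOn pr hsub hprinj.injOn
      _ = X0.card * (OE.card * (OE.card * OE.card)) := by
          rw [card_product, card_product, card_product]
      _ ≤ ((d + Δ) * d) * ((d * n) * ((d * n) * (d * n))) := by
          rw [hOEcard]
          exact Nat.mul_le_mul_right _ hX0card
  have hF2b : F2.card ≤ (d * n) * (((d + Δ - 1) * d) * ((d * n) * (d * n))) := by
    have hsub : ∀ y ∈ F2, pr y ∈ OE ×ˢ (X1 ×ˢ (OE ×ˢ OE)) := by
      intro y hy
      simp only [hF2_def, mem_filter] at hy
      obtain ⟨hyT, hc⟩ := hy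
      obtain ⟨hOE1, hOE2, hOE3, hOE4⟩ := hTmem y hyT
      have hy2 : y 2 ∈ bad1 := by
        rw [hbad1_def, mem_union]
        by_cases hg : G.Adj v1 (y 2)
        · exact Or.inl (by rwa [mem_neighborFinset])
        · have hnh : ¬ H.Adj v1 (y 2) := fun hh => hc ⟨hg, hh⟩
          exact Or.inr (by simp [mem_sdiff, mem_neighborFinset, hnh])
      simp only [hpr_def, mem_product]
      exact ⟨hOE1, mem_filter.2 ⟨hOE2, hy2⟩, hOE3, hOE4⟩
    calc F2.card ≤ (OE ×ˢ (X1 ×ˢ (OE ×ˢ OE))).card :=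
        card_le_card_of_injOn pr hsub hprinj.injOn
      _ = OE.card * (X1.card * (OE.card * OE.card)) := by
          rw [card_product, card_product, card_product]
      _ ≤ (d * n) * (((d + Δ - 1) * d) * ((d * n) * (d * n))) := by
          rw [hOEcard]
          exact Nat.mul_le_mul_left _ (Nat.mul_le_mul_right _ hX1card)
  have hF3b : F3.card ≤ (d * n) * ((d * n) * (((d + Δ - 1) * d) * (d * n))) := by
    have hsub : ∀ y ∈ F3, pr y ∈ OE ×ˢ (OE ×ˢ (X1 ×ˢ OE)) := by
      intro y hy
      simp only [hF3_def, mem_filter] at hy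
      obtain ⟨hyT, hc⟩ := hy
      obtain ⟨hOE1, hOE2, hOE3, hOE4⟩ := hTmem y hyT
      have hy4 : y 4 ∈ bad1 := by
        rw [hbad1_def, mem_union]
        by_cases hg : G.Adj v1 (y 4)
        · exact Or.inl (by rwa [mem_neighborFinset])
        · have hnh : ¬ H.Adj v1 (y 4) := fun hh => hc ⟨hg, hh⟩
          exact Or.inr (by simp [mem_sdiff, mem_neighborFinset, hnh])
      simp only [hpr_def, mem_product]
      exact ⟨hOE1, hOE2, mem_filter.2 ⟨hOE3, hy4⟩, hOE4⟩
    calc F3.card ≤ (OE ×ˢ (OE ×ˢ (X1 ×ˢ OE))).card :=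
        card_le_card_of_injOn pr hsub hprinj.injOn
      _ = OE.card * (OE.card * (X1.card * OE.card)) := by
          rw [card_product, card_product, card_product]
      _ ≤ (d * n) * ((d * n) * (((d + Δ - 1) * d) * (d * n))) := by
          rw [hOEcard]
          exact Nat.mul_le_mul_left _ (Nat.mul_le_mul_left _
            (Nat.mul_le_mul_right _ hX1card))
  have hF4b : F4.card ≤ (d * n) * ((d * n) * ((d * n) * ((d + Δ) * d))) := by
    have hsub : ∀ y ∈ F4, pr y ∈ OE ×ˢ (OE ×ˢ (OE ×ˢ X2)) := by
      intro y hy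
      simp only [hF4_def, mem_filter] at hy
      obtain ⟨hyT, hc⟩ := hy
      obtain ⟨hOE1, hOE2, hOE3, hOE4⟩ := hTmem y hyT
      have hy6 : y 6 ∈ bad2s := by
        rw [hbad2s_def, mem_union]
        by_cases hg : G.Adj v2 (y 6)
        · exact Or.inl (by rwa [mem_neighborFinset])
        · have hnh : ¬ H.Adj v2 (y 6) := fun hh => hc ⟨hg, hh⟩
          exact Or.inr (by simp [mem_sdiff, mem_neighborFinset, hnh])
      simp only [hpr_def, mem_product]
      exact ⟨hOE1, hOE2, hOE3, mem_filter.2 ⟨hOE4, hy6⟩⟩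
    calc F4.card ≤ (OE ×ˢ (OE ×ˢ (OE ×ˢ X2))).card :=
        card_le_card_of_injOn pr hsub hprinj.injOn
      _ = OE.card * (OE.card * (OE.card * X2.card)) := by
          rw [card_product, card_product, card_product]
      _ ≤ (d * n) * ((d * n) * ((d * n) * ((d + Δ) * d))) := by
          rw [hOEcard]
          exact Nat.mul_le_mul_left _ (Nat.mul_le_mul_left _
            (Nat.mul_le_mul_left _ hX2card))
  -- bounds on F5, F6
  have hF5b : F5.card ≤ ((d * d + Δ * d + (d - 1)) * ((d * n) * (d * n))) * (d * n) := by
    have h := card_le_mul_card_image_of_maps_to (s := F5) (t := OE)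
      (f := fun y : Fin 8 → Fin n => (y 0, y 1))
      (fun y hy => (hTmem y (filter_subset _ _ hy)).1)
      ((d * d + Δ * d + (d - 1)) * ((d * n) * (d * n)))
      (fun e1 he1 => by
        have he1G : G.Adj e1.1 e1.2 := by
          simp only [hOE_def, mem_filter, mem_univ, true_and] at he1; exact he1
        have hBad2card : (OE.filter fun p => (G.Adj e1.2 p.2 ∨ ¬ H.Adj e1.2 p.2) ∧
            s(p.1, p.2) ≠ s(e1.1, e1.2)).card ≤ d * d + Δ * d + (d - 1) := by
          refine bad2_card_le G H hreg hH hΔn e1 he1G (fun p hp => ?_)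
          simp only [mem_filter] at hp
          have hpOE := hp.1
          simp only [hOE_def, mem_filter, mem_univ, true_and] at hpOE
          exact ⟨hpOE, hp.2.1, hp.2.2⟩
        refine le_trans (card_le_card_of_injOn
          (t := (OE.filter fun p => (G.Adj e1.2 p.2 ∨ ¬ H.Adj e1.2 p.2) ∧
            s(p.1, p.2) ≠ s(e1.1, e1.2)) ×ˢ (OE ×ˢ OE))
          (fun y => ((y 2, y 3), ((y 4, y 5), (y 6, y 7)))) ?_ ?_) ?_
        · intro y hy
          simp only [mem_coe, mem_filter] at hy
          obtain ⟨hyF, hye⟩ := hy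
          simp only [hF5_def, mem_filter] at hyF
          obtain ⟨hyT, hc⟩ := hyF
          obtain ⟨_, hOE2, hOE3, hOE4⟩ := hTmem y hyT
          have hd12 : s(y 0, y 1) ≠ s(y 2, y 3) := by
            simp only [hT_def, mem_filter] at hyT
            exact hyT.2.1
          have he12 : e1.2 = y 1 := by rw [← hye]
          have he11 : e1.1 = y 0 := by rw [← hye]
          have hdisj : G.Adj e1.2 (y 3) ∨ ¬ H.Adj e1.2 (y 3) := by
            rw [he12]
            by_cases hg : G.Adj (y 1) (y 3)
            · exact Or.inl hg
            · exact Or.inr (fun hh => hc ⟨hg, hh⟩)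
          have hne : s(y 2, y 3) ≠ s(e1.1, e1.2) := by
            rw [he11, he12]
            exact fun hcon => hd12 hcon.symm
          simp only [mem_coe, mem_product]
          exact ⟨mem_filter.2 ⟨hOE2, hdisj, hne⟩, hOE3, hOE4⟩
        · intro y hy z hz hfz
          simp only [coe_filter, Set.mem_setOf_eq] at hy hz
          have e2 : y 2 = z 2 := congrArg (fun t => t.1.1) hfz
          have e3 : y 3 = z 3 := congrArg (fun t => t.1.2) hfz
          have e4 : y 4 = z 4 := congrArg (fun t => t.2.1.1) hfz
          have e5 : y 5 = z 5 := congrArg (fun t => t.2.1.2) hfz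
          have e6 : y 6 = z 6 := congrArg (fun t => t.2.2.1) hfz
          have e7 : y 7 = z 7 := congrArg (fun t => t.2.2.2) hfz
          have hee := hy.2.trans hz.2.symm
          have e0 : y 0 = z 0 := congrArg Prod.fst hee
          have e1' : y 1 = z 1 := congrArg Prod.snd hee
          funext j
          fin_cases j <;> assumption
        · rw [card_product, card_product, hOEcard]
          exact Nat.mul_le_mul_right _ hBad2card)
    rwa [hOEcard] at h
  have hF6b : F6.card ≤ ((d * d + Δ * d + (d - 1)) * ((d * n) * (d * n))) * (d * n) := by
    have h := card_le_mul_card_image_of_maps_to (s := F6) (t := OE)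
      (f := fun y : Fin 8 → Fin n => (y 4, y 5))
      (fun y hy => (hTmem y (filter_subset _ _ hy)).2.2.1)
      ((d * d + Δ * d + (d - 1)) * ((d * n) * (d * n)))
      (fun e1 he1 => by
        have he1G : G.Adj e1.1 e1.2 := by
          simp only [hOE_def, mem_filter, mem_univ, true_and] at he1; exact he1
        have hBad2card : (OE.filter fun p => (G.Adj e1.2 p.2 ∨ ¬ H.Adj e1.2 p.2) ∧
            s(p.1, p.2) ≠ s(e1.1, e1.2)).card ≤ d * d + Δ * d + (d - 1) := by
          refine bad2_card_le G H hreg hH hΔn e1 he1G (fun p hp => ?_)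
          simp only [mem_filter] at hp
          have hpOE := hp.1
          simp only [hOE_def, mem_filter, mem_univ, true_and] at hpOE
          exact ⟨hpOE, hp.2.1, hp.2.2⟩
        refine le_trans (card_le_card_of_injOn
          (t := (OE.filter fun p => (G.Adj e1.2 p.2 ∨ ¬ H.Adj e1.2 p.2) ∧
            s(p.1, p.2) ≠ s(e1.1, e1.2)) ×ˢ (OE ×ˢ OE))
          (fun y => ((y 6, y 7), ((y 0, y 1), (y 2, y 3)))) ?_ ?_) ?_
        · intro y hy
          simp only [mem_coe, mem_filter] at hy
          obtain ⟨hyF, hye⟩ := hy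
          simp only [hF6_def, mem_filter] at hyF
          obtain ⟨hyT, hc⟩ := hyF
          obtain ⟨hOE1, hOE2, _, hOE4⟩ := hTmem y hyT
          have hd34 : s(y 4, y 5) ≠ s(y 6, y 7) := by
            simp only [hT_def, mem_filter] at hyT
            exact hyT.2.2.2.2.2.2
          have he12 : e1.2 = y 5 := by rw [← hye]
          have he11 : e1.1 = y 4 := by rw [← hye]
          have hdisj : G.Adj e1.2 (y 7) ∨ ¬ H.Adj e1.2 (y 7) := by
            rw [he12]
            by_cases hg : G.Adj (y 5) (y 7)
            · exact Or.inl hg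
            · exact Or.inr (fun hh => hc ⟨hg, hh⟩)
          have hne : s(y 6, y 7) ≠ s(e1.1, e1.2) := by
            rw [he11, he12]
            exact fun hcon => hd34 hcon.symm
          simp only [mem_coe, mem_product]
          exact ⟨mem_filter.2 ⟨hOE4, hdisj, hne⟩, hOE1, hOE2⟩
        · intro y hy z hz hfz
          simp only [coe_filter, Set.mem_setOf_eq] at hy hz
          have e6 : y 6 = z 6 := congrArg (fun t => t.1.1) hfz
          have e7 : y 7 = z 7 := congrArg (fun t => t.1.2) hfz
          have e0 : y 0 = z 0 := congrArg (fun t => t.2.1.1) hfz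
          have e1' : y 1 = z 1 := congrArg (fun t => t.2.1.2) hfz
          have e2 : y 2 = z 2 := congrArg (fun t => t.2.2.1) hfz
          have e3 : y 3 = z 3 := congrArg (fun t => t.2.2.2) hfz
          have hee := hy.2.trans hz.2.symm
          have e4 : y 4 = z 4 := congrArg Prod.fst hee
          have e5 : y 5 = z 5 := congrArg Prod.snd hee
          funext j
          fin_cases j <;> assumption
        · rw [card_product, card_product, hOEcard]
          exact Nat.mul_le_mul_right _ hBad2card)
    rwa [hOEcard] at h
  -- upper bound on SF
  have hSFUB : SF.card ≤ (d * n) * ((d * n) * ((d * n) * (d * n))) := by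
    have hsub : ∀ y ∈ SF, pr y ∈ OE ×ˢ (OE ×ˢ (OE ×ˢ OE)) := by
      intro y hy
      obtain ⟨hOE1, hOE2, hOE3, hOE4⟩ := hTmem y (hSFT hy)
      simp only [hpr_def, mem_product]
      exact ⟨hOE1, hOE2, hOE3, hOE4⟩
    calc SF.card ≤ (OE ×ˢ (OE ×ˢ (OE ×ˢ OE))).card :=
        card_le_card_of_injOn pr hsub hprinj.injOn
      _ = OE.card * (OE.card * (OE.card * OE.card)) := by
          rw [card_product, card_product, card_product]
      _ = (d * n) * ((d * n) * ((d * n) * (d * n))) := by rw [hOEcard]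
  -- final assembly
  rw [hbhat]
  exact final_combined d n Δ i SF.card T'.card APY.card F1.card F2.card F3.card F4.card
    F5.card F6.card A.card OB.card hd hΔ1 hdn (by omega) hOBcardA hAPYcard hT'low hTcard
    hF1b hF2b hF3b hF4b hF5b hF6b hSFUB
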